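/- Let X be a metric space, C ⊆ X a closed set with empty interior, and {X₁,…,X_t} a finite cover of X∖C by open subsets of X. If μ is a Borel probability measure on X with μ(C) = 0, then there exist open sets Y₁,…,Y_t such that Y_j ⊆ X_j for each j, Y₁ ∪ ⋯ ∪ Y_t = X∖C, and μ(∂Y_j) = 0 for every 1 ≤ j ≤ t, where ∂Y denotes the topological boundary (frontier) of Y in X. -/

import Mathlib

open MeasureTheory

theorem stmt7 {X : Type*} [MetricSpace X] [MeasurableSpace X] [BorelSpace X]
    (C : Set X) (hCcl : IsClosed C) (hCint : interior C = ∅)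
    (t : ℕ) (Xs : Fin t → Set X) (hXopen : ∀ j, IsOpen (Xs j))
    (hXcover : (⋃ j, Xs j) = Cᶜ)
    (μ : Measure X) [IsProbabilityMeasure μ] (hμC : μ C = 0) :
    ∃ Ys : Fin t → Set X,
      (∀ j, IsOpen (Ys j)) ∧ (∀ j, Ys j ⊆ Xs j) ∧
      (⋃ j, Ys j) = Cᶜ ∧ ∀ j, μ (frontier (Ys j)) = 0 := by
  classical
  -- t ≠ 0
  rcases Nat.eq_zero_or_pos t with ht | ht
  · subst ht
    simp only [Set.iUnion_of_empty] at hXcover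
    have hC : C = Set.univ := by
      have := congrArg (·ᶜ) hXcover
      simpa using this.symm
    rw [hC] at hμC
    simp at hμC
  have hne : Nonempty (Fin t) := ⟨⟨0, ht⟩⟩
  -- case where some Xs j = univ
  by_cases huniv : ∃ j₀, (Xs j₀)ᶜ = ∅
  · obtain ⟨j₀, hj₀⟩ := huniv
    have hXj₀ : Xs j₀ = Set.univ := by simpa [Set.compl_empty_iff] using hj₀
    have hCuniv : Cᶜ = Set.univ := by
      apply Set.eq_univ_of_univ_subset
      rw [← hXcover, ← hXj₀]
      exact Set.subset_iUnion _ j₀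
    refine ⟨fun j => if j = j₀ then Set.univ else ∅, ?_, ?_, ?_, ?_⟩
    · intro j; by_cases h : j = j₀ <;> simp [h]
    · intro j; by_cases h : j = j₀ <;> simp [h, hXj₀]
    · rw [hCuniv]
      apply Set.eq_univ_of_univ_subset
      intro x _
      exact Set.mem_iUnion.2 ⟨j₀, by simp⟩
    · intro j; by_cases h : j = j₀ <;> simp [h]
  push_neg at huniv
  have hXsne : ∀ j, ((Xs j)ᶜ).Nonempty := huniv
  set f : Fin t → X → ℝ := fun j x => Metric.infDist x (Xs j)ᶜ with hf
  set φ : X → ℝ := fun x => Finset.univ.sup' Finset.univ_nonempty (fun j => f j x) with hφ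
  have hfcont : ∀ j, Continuous (f j) := fun j => Metric.continuous_infDist_pt _
  have hφcont : Continuous φ :=
    Continuous.finset_sup'_apply Finset.univ_nonempty (fun j _ => hfcont j)
  have hfnonneg : ∀ j x, 0 ≤ f j x := fun j x => Metric.infDist_nonneg
  have hle : ∀ j x, f j x ≤ φ x := fun j x =>
    Finset.le_sup' (fun j => f j x) (Finset.mem_univ j)
  have hφnonneg : ∀ x, 0 ≤ φ x := fun x => le_trans (hfnonneg (Classical.arbitrary (Fin t)) x) (hle _ x)
  -- f j x = 0 iff x ∈ (Xs j)ᶜ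
  have hfzero : ∀ j x, f j x = 0 ↔ x ∈ (Xs j)ᶜ := by
    intro j x
    constructor
    · intro h
      have := ((hXopen j).isClosed_compl.mem_iff_infDist_zero (hXsne j)).2 h
      exact this
    · intro h
      exact ((hXopen j).isClosed_compl.mem_iff_infDist_zero (hXsne j)).1 h
  have hfpos : ∀ j x, x ∈ Xs j ↔ 0 < f j x := by
    intro j x
    rw [← not_iff_not]
    push_neg
    constructor
    · intro h
      have h0 : f j x = 0 := (hfzero j x).2 h
      simp [h0]
    · intro h
      exact (hfzero j x).1 (le_antisymm h (hfnonneg j x))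
  -- φ x = 0 iff x ∈ C
  have hφzero : ∀ x, φ x = 0 ↔ x ∈ C := by
    intro x
    constructor
    · intro h
      by_contra hx
      have hx' : x ∈ Cᶜ := hx
      rw [← hXcover] at hx'
      obtain ⟨j, hj⟩ := Set.mem_iUnion.1 hx'
      have := (hfpos j x).1 hj
      linarith [hle j x]
    · intro hx
      have : ∀ j, f j x = 0 := by
        intro j
        refine (hfzero j x).2 ?_
        intro hxj
        have : x ∈ Cᶜ := by rw [← hXcover]; exact Set.mem_iUnion.2 ⟨j, hxj⟩
        exact this hx
      refine le_antisymm ?_ (hφnonneg x)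
      apply Finset.sup'_le
      intro j _
      exact le_of_eq (this j)
  -- auxiliary function g j  with countable positive level sets
  set g : Fin t → X → ℝ := fun j x => if φ x = 0 then -1 else f j x / φ x with hg
  have hgm : ∀ j, Measurable (g j) := by
    intro j
    apply Measurable.ite
    · exact measurableSet_eq_fun hφcont.measurable measurable_const
    · exact measurable_const
    · exact ((hfcont j).measurable).div hφcont.measurable
  have hcnt : ∀ j, Set.Countable {r : ℝ | 0 < μ {x | g j x = r}} := fun j =>
    Measure.countable_meas_level_set_pos (hgm j)
  set B : Set ℝ := ⋃ j, {r : ℝ | 0 < μ {x | g j x = r}} with hB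
  have hBcnt : B.Countable := Set.countable_iUnion hcnt
  -- pick r ∈ Ioo 0 1 \ B
  have hIoo : ¬ (Set.Ioo (0:ℝ) 1 ⊆ B) := by
    intro hsub
    have h1 : (volume (Set.Ioo (0:ℝ) 1)) = 0 :=
      measure_mono_null hsub (Set.Countable.measure_zero hBcnt volume)
    simp [Real.volume_Ioo] at h1
  obtain ⟨r, hrIoo, hrB⟩ := Set.not_subset.1 hIoo
  obtain ⟨hr0, hr1⟩ := hrIoo
  refine ⟨fun j => {x | r * φ x < f j x}, ?_, ?_, ?_, ?_⟩
  · intro j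
    exact isOpen_lt (continuous_const.mul hφcont) (hfcont j)
  · intro j x hx
    simp only [Set.mem_setOf_eq] at hx
    have : 0 < f j x := lt_of_le_of_lt (mul_nonneg hr0.le (hφnonneg x)) hx
    exact (hfpos j x).2 this
  · apply Set.Subset.antisymm
    · intro x hx
      obtain ⟨j, hj⟩ := Set.mem_iUnion.1 hx
      simp only [Set.mem_setOf_eq] at hj
      have hfx : 0 < f j x := lt_of_le_of_lt (mul_nonneg hr0.le (hφnonneg x)) hj
      rw [← hXcover]
      exact Set.mem_iUnion.2 ⟨j, (hfpos j x).2 hfx⟩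
    · intro x hx
      have hφpos : 0 < φ x := by
        rcases lt_or_eq_of_le (hφnonneg x) with h | h
        · exact h
        · exact absurd ((hφzero x).1 h.symm) hx
      obtain ⟨j, _, hj⟩ := Finset.exists_mem_eq_sup' (Finset.univ_nonempty (α := Fin t))
        (fun j => f j x)
      refine Set.mem_iUnion.2 ⟨j, ?_⟩
      simp only [Set.mem_setOf_eq]
      calc r * φ x < 1 * φ x := by nlinarith
        _ = φ x := one_mul _
        _ = f j x := hj
  · intro j
    have hsub : frontier {x | r * φ x < f j x} ⊆ {x | g j x = r} ∪ C := by
      have h1 : frontier {x | r * φ x < f j x} ⊆ {x | r * φ x = f j x} :=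
        frontier_lt_subset_eq (continuous_const.mul hφcont) (hfcont j)
      intro x hx
      have hx' := h1 hx
      simp only [Set.mem_setOf_eq] at hx'
      by_cases hC : x ∈ C
      · exact Or.inr hC
      · left
        have hφpos : φ x ≠ 0 := fun h => hC ((hφzero x).1 h)
        simp only [Set.mem_setOf_eq, hg, if_neg hφpos]
        field_simp
        linarith
    have hgr : μ {x | g j x = r} = 0 := by
      by_contra h
      apply hrB
      refine Set.mem_iUnion.2 ⟨j, ?_⟩
      simp only [Set.mem_setOf_eq]
      exact lt_of_le_of_ne zero_le (Ne.symm h)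
    have hle0 : μ (frontier {x | r * φ x < f j x}) ≤ 0 :=
      calc μ (frontier {x | r * φ x < f j x}) ≤ μ ({x | g j x = r} ∪ C) := measure_mono hsub
        _ ≤ μ {x | g j x = r} + μ C := measure_union_le _ _
        _ = 0 := by rw [hgr, hμC, add_zero]
    exact le_antisymm hle0 zero_le
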